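/- arXiv:2405.08103 — 3 statements merged into one kernel-verified Lean document; each statement's English description precedes it below -/
import Mathlib

section
/- Let n ≥ 1 and let V be an n × n integer matrix such that det(V − Vᵀ) = 1 or det(V − Vᵀ) = −1. If q is a nonzero rational number such that det(V − q·Vᵀ) = 0 (the determinant taken over ℚ, viewing V as a rational matrix), then there exists an integer a with a ≠ 0 and a ≠ 1 such that q = (a − 1)/a; in particular q > 0. -/
open Matrix

/-- Algebraic content of Proposition 5.1: a nonzero rational root `q` of
`det(V - t Vᵀ)` (for an integer matrix `V` with `det(V - Vᵀ) = ±1`, the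
algebraic model of a Seifert matrix) has the form `(a - 1)/a` for an
integer `a ∉ {0, 1}`; in particular `q > 0`. -/
theorem rational_root_of_seifert_form (n : ℕ) (hn : 1 ≤ n)
    (V : Matrix (Fin n) (Fin n) ℤ)
    (hV : (V - Vᵀ).det = 1 ∨ (V - Vᵀ).det = -1)
    (q : ℚ) (hq : q ≠ 0)
    (hroot : (V.map ((↑) : ℤ → ℚ) - q • (V.map ((↑) : ℤ → ℚ))ᵀ).det = 0) :
    ∃ a : ℤ, a ≠ 0 ∧ a ≠ 1 ∧ q = ((a : ℚ) - 1) / (a : ℚ) ∧ 0 < q := by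
  classical
  set M : Matrix (Fin n) (Fin n) (Polynomial ℤ) :=
    V.map Polynomial.C - (Polynomial.X : Polynomial ℤ) • (Vᵀ).map Polynomial.C with hM
  set P : Polynomial ℤ := M.det with hP
  -- q is a root of P
  have h1 : Polynomial.aeval q P = 0 := by
    have h := AlgHom.map_det (Polynomial.aeval q : Polynomial ℤ →ₐ[ℤ] ℚ) M
    simp only [AlgHom.mapMatrix_apply] at h
    rw [hP, h]
    have hMmap : M.map (Polynomial.aeval q : Polynomial ℤ →ₐ[ℤ] ℚ)
        = V.map ((↑) : ℤ → ℚ) - q • (V.map ((↑) : ℤ → ℚ))ᵀ := by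
      ext i j
      simp [hM, Matrix.map_apply, Matrix.sub_apply, Matrix.smul_apply,
        Matrix.transpose_apply, mul_comm]
    rw [hMmap, hroot]
  -- P(1) = det (V - Vᵀ)
  have h2 : Polynomial.eval 1 P = (V - Vᵀ).det := by
    have h := RingHom.map_det (Polynomial.evalRingHom (1:ℤ)) M
    simp only [RingHom.mapMatrix_apply, Polynomial.coe_evalRingHom] at h
    rw [hP, h]
    congr 1
    ext i j
    simp [hM, Matrix.map_apply, Matrix.sub_apply, Matrix.smul_apply, Matrix.transpose_apply]
  set Q : Polynomial ℤ := P.comp (Polynomial.X + 1) with hQ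
  have h3 : Polynomial.aeval (q - 1) Q = 0 := by
    rw [hQ, Polynomial.aeval_comp]
    simpa using h1
  have h4 : Q.coeff 0 = (V - Vᵀ).det := by
    rw [Polynomial.coeff_zero_eq_eval_zero, hQ, Polynomial.eval_comp]
    simpa using h2
  have hdvd : IsFractionRing.num ℤ (q - 1) ∣ Q.coeff 0 := num_dvd_of_is_root h3
  have hunit : IsFractionRing.num ℤ (q - 1) = 1 ∨ IsFractionRing.num ℤ (q - 1) = -1 := by
    rw [h4] at hdvd
    rcases hV with h | h <;> rw [h] at hdvd <;>
      rcases Int.isUnit_iff.mp (isUnit_of_dvd_unit hdvd (by norm_num)) with h' | h' <;>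
      simp [h']
  set b : ℤ := (IsFractionRing.den ℤ (q - 1) : ℤ) with hb
  have hb0 : b ≠ 0 := nonZeroDivisors.coe_ne_zero _
  have hbq : q - 1 = (IsFractionRing.num ℤ (q - 1) : ℚ) / (b : ℚ) := by
    have h := IsFractionRing.mk'_num_den' ℤ (q - 1)
    simp only [algebraMap_int_eq, Int.coe_castRingHom, eq_intCast] at h
    rw [hb]
    exact h.symm
  have hbQ : (b : ℚ) ≠ 0 := Int.cast_ne_zero.mpr hb0
  rcases hunit with hu | hu
  · -- q = 1 + 1/b = (b+1)/b, take a = -b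
    rw [hu] at hbq
    push_cast at hbq
    have hqval : q = ((b : ℚ) + 1) / b := by
      field_simp at hbq ⊢
      linarith
    have hbne : b ≠ -1 := by
      intro h
      apply hq
      rw [hqval, h]; norm_num
    refine ⟨-b, by simpa using hb0, ?_, ?_, ?_⟩
    · intro h; apply hbne; omega
    · rw [hqval]
      push_cast
      rw [div_eq_div_iff hbQ (by simpa using hbQ)]
      ring
    · rw [hqval]
      rcases lt_or_gt_of_ne hb0 with hneg | hpos
      · have h2 : b ≤ -2 := by omega
        apply div_pos_of_neg_of_neg
        · have : (b : ℚ) ≤ -2 := by exact_mod_cast h2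
          linarith
        · exact_mod_cast hneg
      · apply div_pos
        · have : (1 : ℚ) ≤ b := by exact_mod_cast hpos
          linarith
        · exact_mod_cast hpos
  · -- q = 1 - 1/b = (b-1)/b, take a = b
    rw [hu] at hbq
    push_cast at hbq
    have hqval : q = ((b : ℚ) - 1) / b := by
      field_simp at hbq ⊢
      linarith
    have hbne : b ≠ 1 := by
      intro h
      apply hq
      rw [hqval, h]; norm_num
    refine ⟨b, hb0, hbne, by rw [hqval], ?_⟩
    rw [hqval]
    rcases lt_or_gt_of_ne hb0 with hneg | hpos
    · apply div_pos_of_neg_of_neg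
      · have : (b : ℚ) < 0 := by exact_mod_cast hneg
        linarith
      · exact_mod_cast hneg
    · have h2 : 2 ≤ b := by omega
      apply div_pos
      · have : (2 : ℚ) ≤ b := by exact_mod_cast h2
        linarith
      · exact_mod_cast hpos
end

section
/- Let n ≥ 1 and let V be an n × n integer matrix with det(V − Vᵀ) = 1. Suppose there exists a polynomial ∇ with integer coefficients, all of whose coefficients are nonnegative, such that for every nonzero real number x one has det(x·V − x⁻¹·Vᵀ) = ∇(x − x⁻¹) (determinants of real matrices, with V regarded as a real matrix). Then there is no nonzero rational number q with det(V − q·Vᵀ) = 0. -/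
open Matrix

namespace NoRatRootAux

open Polynomial

lemma det_aeval (n : ℕ) (V : Matrix (Fin n) (Fin n) ℤ) (K : Type*) [CommRing K] (t : K) :
    (aeval t) (V.map (C : ℤ → ℤ[X]) - (X : ℤ[X]) • (V.map C)ᵀ).det
      = (V.map ((↑) : ℤ → K) - t • (V.map ((↑) : ℤ → K))ᵀ).det := by
  rw [AlgHom.map_det]
  congr 1
  ext i j
  simp [Matrix.map_apply]

lemma pair_sum {M : Type*} [AddCommMonoid M] (f : ℕ → M) (N : ℕ) :
    ∑ i ∈ Finset.range (2 * N), f i = ∑ k ∈ Finset.range N, (f (2 * k) + f (2 * k + 1)) := by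
  induction N with
  | zero => simp
  | succ N ih =>
    rw [Finset.sum_range_succ, ← ih, show 2 * (N + 1) = (2 * N + 1) + 1 by ring,
      Finset.sum_range_succ, Finset.sum_range_succ, add_assoc]

lemma coeff_comp_neg (p : ℝ[X]) (j : ℕ) : (p.comp (-X)).coeff j = (-1) ^ j * p.coeff j := by
  induction p using Polynomial.induction_on' with
  | add p q hp hq => simp [add_comp, hp, hq, mul_add]
  | monomial i a =>
    rw [monomial_comp, neg_pow]
    rw [show ((-1 : ℝ[X]) ^ i) = C ((-1 : ℝ) ^ i) by simp]
    rw [← mul_assoc, ← C_mul, coeff_C_mul, coeff_X_pow, coeff_monomial]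
    rcases eq_or_ne j i with rfl | hne
    · simp [mul_comm]
    · simp [hne, Ne.symm hne]

lemma exists_pos_sub_inv (y : ℝ) : ∃ x : ℝ, 0 < x ∧ x - x⁻¹ = y := by
  have h1 : |y| < Real.sqrt (y ^ 2 + 4) := by
    nlinarith [Real.sq_sqrt (by positivity : (0:ℝ) ≤ y ^ 2 + 4), abs_nonneg y,
      Real.sqrt_nonneg (y ^ 2 + 4), sq_abs y]
  set x : ℝ := (y + Real.sqrt (y ^ 2 + 4)) / 2 with hxdef
  have hx : 0 < x := by have := neg_abs_le y; rw [hxdef]; linarith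
  refine ⟨x, hx, ?_⟩
  have hs : Real.sqrt (y ^ 2 + 4) ^ 2 = y ^ 2 + 4 := Real.sq_sqrt (by positivity)
  have key : x * (x - x⁻¹) = x * y := by
    rw [mul_sub, mul_inv_cancel₀ hx.ne']
    rw [hxdef]; nlinarith [hs]
  exact mul_left_cancel₀ hx.ne' key

end NoRatRootAux

open NoRatRootAux Polynomial

/-- Algebraic content of Corollary 5.2: if an integer matrix `V` with
`det(V - Vᵀ) = 1` (a Seifert matrix) admits a "Conway polynomial" `∇` with
nonnegative integer coefficients satisfying `det(x V - x⁻¹ Vᵀ) = ∇(x - x⁻¹)`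
for all nonzero real `x`, then `det(V - t Vᵀ)` (the Alexander polynomial)
has no nonzero rational roots. -/
theorem no_rational_root_of_nonneg_conway (n : ℕ) (hn : 1 ≤ n)
    (V : Matrix (Fin n) (Fin n) ℤ)
    (hV : (V - Vᵀ).det = 1)
    (conway : Polynomial ℤ)
    (hpos : ∀ i, 0 ≤ conway.coeff i)
    (hconway : ∀ x : ℝ, x ≠ 0 →
      (x • V.map ((↑) : ℤ → ℝ) - x⁻¹ • (V.map ((↑) : ℤ → ℝ))ᵀ).det =
        Polynomial.aeval (x - x⁻¹) conway) :
    ¬ ∃ q : ℚ, q ≠ 0 ∧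
      (V.map ((↑) : ℤ → ℚ) - q • (V.map ((↑) : ℤ → ℚ))ᵀ).det = 0 := by
  rintro ⟨q, hq0, hqdet⟩
  -- n is even
  have hneven : Even n := by
    by_contra h
    have hodd : Odd n := Nat.not_even_iff_odd.mp h
    have h1 : (V - Vᵀ)ᵀ = -(V - Vᵀ) := by simp [transpose_sub]
    have h2 : (V - Vᵀ).det = -(V - Vᵀ).det := by
      conv_lhs => rw [← Matrix.det_transpose, h1, Matrix.det_neg, Fintype.card_fin,
        hodd.neg_one_pow]
      ring
    omega
  obtain ⟨m, hm⟩ := hneven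
  have hm2 : n = 2 * m := by omega
  set d := conway.natDegree with hd
  set Δ : ℤ[X] := (V.map (C : ℤ → ℤ[X]) - (X : ℤ[X]) • (V.map C)ᵀ).det with hΔ
  -- constant coefficient of conway is 1
  have hc0 : conway.coeff 0 = 1 := by
    have h := hconway 1 one_ne_zero
    simp only [inv_one, one_smul, sub_self] at h
    rw [aeval_def, eval₂_at_zero] at h
    have hdet : ((V - Vᵀ).det : ℝ) = (V.map ((↑) : ℤ → ℝ) - (V.map ((↑) : ℤ → ℝ))ᵀ).det := by
      rw [show (((V - Vᵀ).det : ℤ) : ℝ) = (Int.castRingHom ℝ) (V - Vᵀ).det from rfl,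
        RingHom.map_det]
      congr 1
      ext i j
      simp [Matrix.map_apply]
    rw [← hdet, hV] at h
    have h2 := h.symm
    rw [algebraMap_int_eq, eq_intCast] at h2
    exact_mod_cast h2
  -- odd coefficients of conway vanish
  have hoddc : ∀ j, Odd j → conway.coeff j = 0 := by
    have heq : ∀ y : ℝ, (aeval (-y)) conway = (aeval y) conway := by
      intro y
      obtain ⟨x, hx, hxy⟩ := exists_pos_sub_inv y
      have h1 := hconway x hx.ne'
      have h2 := hconway (-x) (neg_ne_zero.mpr hx.ne')
      rw [hxy] at h1
      have hmat : (-x) • V.map ((↑) : ℤ → ℝ) - (-x)⁻¹ • (V.map ((↑) : ℤ → ℝ))ᵀ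
          = -(x • V.map ((↑) : ℤ → ℝ) - x⁻¹ • (V.map ((↑) : ℤ → ℝ))ᵀ) := by
        rw [inv_neg]
        ext i j
        simp
        ring
      have hy2 : -x - (-x)⁻¹ = -y := by rw [inv_neg]; rw [← hxy]; ring
      rw [hmat, hy2, Matrix.det_neg, Fintype.card_fin,
        Even.neg_one_pow ⟨m, hm⟩, one_mul] at h2
      rw [← h2, h1]
    have hevalmap : ∀ z : ℝ, eval z (conway.map (Int.castRingHom ℝ)) = (aeval z) conway :=
      fun z => by rw [aeval_def, algebraMap_int_eq, ← eval_map]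
    have hfun : conway.map (Int.castRingHom ℝ)
        = (conway.map (Int.castRingHom ℝ)).comp (-X) := by
      apply Polynomial.funext
      intro y
      rw [eval_comp, eval_neg, eval_X, hevalmap, hevalmap]
      exact (heq y).symm
    intro j hj
    have := congrArg (fun p => Polynomial.coeff p j) hfun
    simp only [coeff_comp_neg, hj.neg_one_pow, coeff_map, eq_intCast] at this
    have : (conway.coeff j : ℝ) = 0 := by linarith [this]
    exact_mod_cast this
  have hevalmap : ∀ (p : ℤ[X]) (z : ℝ), eval z (p.map (Int.castRingHom ℝ)) = (aeval z) p :=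
    fun p z => by rw [aeval_def, algebraMap_int_eq, ← eval_map]
  -- evaluation of conway as a sum of even powers
  have hevalsum : ∀ y : ℝ, (aeval y) conway
      = ∑ k ∈ Finset.range (d + 1), (conway.coeff (2 * k) : ℝ) * (y ^ 2) ^ k := by
    intro y
    rw [Polynomial.aeval_eq_sum_range]
    have hext : ∑ i ∈ Finset.range (d + 1), conway.coeff i • y ^ i
        = ∑ i ∈ Finset.range (2 * (d + 1)), conway.coeff i • y ^ i := by
      apply Finset.sum_subset
      · exact Finset.range_subset_range.mpr (by omega)
      · intro i hi1 hi2
        simp only [Finset.mem_range] at hi1 hi2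
        rw [Polynomial.coeff_eq_zero_of_natDegree_lt (by omega), zero_smul]
    rw [hext, pair_sum]
    apply Finset.sum_congr rfl
    intro k _
    rw [hoddc (2 * k + 1) ⟨k, by ring⟩, zero_smul, add_zero, zsmul_eq_mul, ← pow_mul]
  set Q : ℤ[X] := ∑ k ∈ Finset.range (d + 1),
      C (conway.coeff (2 * k)) * (X - 1) ^ (2 * k) * X ^ (d - k) with hQ
  have hQeval : ∀ {K : Type} [CommRing K] (t : K), (aeval t) Q
      = ∑ k ∈ Finset.range (d + 1),
          (conway.coeff (2 * k) : K) * (t - 1) ^ (2 * k) * t ^ (d - k) := by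
    intro K _ t
    rw [hQ, map_sum]
    apply Finset.sum_congr rfl
    intro k _
    simp
  -- the key polynomial identity
  have hid : (X : ℤ[X]) ^ d * Δ = X ^ m * Q := by
    apply Polynomial.map_injective (Int.castRingHom ℝ) Int.cast_injective
    apply Polynomial.eq_of_infinite_eval_eq
    apply Set.Infinite.mono (s := Set.Ioi (0 : ℝ)) ?_ (Set.Ioi_infinite 0)
    intro t ht
    simp only [Set.mem_Ioi] at ht
    simp only [Set.mem_setOf_eq, hevalmap]
    have htne : t ≠ 0 := ht.ne'
    set s : ℝ := Real.sqrt t with hs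
    have hs0 : 0 < s := Real.sqrt_pos.mpr ht
    have hss : s * s = t := Real.mul_self_sqrt ht.le
    set x : ℝ := s⁻¹ with hx
    have hx0 : x ≠ 0 := inv_ne_zero hs0.ne'
    have hxinv : x⁻¹ = s := inv_inv s
    have hcx := hconway x hx0
    have hmat : x • V.map ((↑) : ℤ → ℝ) - x⁻¹ • (V.map ((↑) : ℤ → ℝ))ᵀ
        = x • (V.map ((↑) : ℤ → ℝ) - t • (V.map ((↑) : ℤ → ℝ))ᵀ) := by
      rw [smul_sub, smul_smul, show x * t = x⁻¹ by
        rw [hxinv, hx]; field_simp; rw [sq]; exact hss.symm]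
    rw [hmat, Matrix.det_smul, Fintype.card_fin] at hcx
    have hdetΔ : (V.map ((↑) : ℤ → ℝ) - t • (V.map ((↑) : ℤ → ℝ))ᵀ).det = (aeval t) Δ :=
      (det_aeval n V ℝ t).symm
    rw [hdetΔ] at hcx
    have hxn : x ^ n = (t ^ m)⁻¹ := by
      rw [hm2, pow_mul, show x ^ 2 = t⁻¹ by rw [hx, sq, ← mul_inv, hss], inv_pow]
    rw [hxn] at hcx
    have htm : (0 : ℝ) < t ^ m := by positivity
    have hΔt : (aeval t) Δ = t ^ m * (aeval (x - x⁻¹)) conway := by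
      rw [← hcx, ← mul_assoc, mul_inv_cancel₀ htm.ne', one_mul]
    have hy2 : (x - x⁻¹) ^ 2 = (t - 1) ^ 2 / t := by
      rw [hxinv, hx, eq_div_iff htne]
      calc (s⁻¹ - s) ^ 2 * t = ((s⁻¹ - s) * s) ^ 2 := by rw [← hss]; ring
        _ = (s⁻¹ * s - s * s) ^ 2 := by ring
        _ = (t - 1) ^ 2 := by rw [inv_mul_cancel₀ hs0.ne', hss]; ring
    rw [_root_.map_mul, _root_.map_mul, map_pow, map_pow, aeval_X, hΔt, hevalsum, hQeval, hy2]
    rw [Finset.mul_sum, Finset.mul_sum, Finset.mul_sum]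
    apply Finset.sum_congr rfl
    intro k hk
    simp only [Finset.mem_range] at hk
    have hkd : k ≤ d := by omega
    have htk : t ^ (d - k) * t ^ k = t ^ d := by rw [← pow_add]; congr 1; omega
    rw [div_pow, ← pow_mul]
    field_simp
    rw [← htk]
    ring
  -- specialize the identity at q
  have hΔq : (aeval (q : ℚ)) Δ = 0 := by
    rw [hΔ]
    exact (det_aeval n V ℚ q).trans hqdet
  have hQq : (aeval (q : ℚ)) Q = 0 := by
    have h := congrArg (aeval (q : ℚ)) hid
    rw [_root_.map_mul, _root_.map_mul, map_pow, map_pow, aeval_X, hΔq, mul_zero] at h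
    have hqm : (q : ℚ) ^ m ≠ 0 := pow_ne_zero _ hq0
    exact (mul_eq_zero.mp h.symm).resolve_left hqm
  set w : ℚ := (q - 1) ^ 2 / q with hw
  have hPsum : ∑ k ∈ Finset.range (d + 1), (conway.coeff (2 * k) : ℚ) * w ^ k = 0 := by
    have h2 : (aeval (q : ℚ)) Q
        = q ^ d * ∑ k ∈ Finset.range (d + 1), (conway.coeff (2 * k) : ℚ) * w ^ k := by
      rw [hQeval, Finset.mul_sum]
      apply Finset.sum_congr rfl
      intro k hk
      simp only [Finset.mem_range] at hk
      have hkd : k ≤ d := by omega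
      have htk : (q : ℚ) ^ (d - k) * q ^ k = q ^ d := by rw [← pow_add]; congr 1; omega
      rw [hw, div_pow, ← pow_mul]
      field_simp
      rw [← htk]
      ring
    rw [hQq] at h2
    have hqd : (q : ℚ) ^ d ≠ 0 := pow_ne_zero _ hq0
    exact (mul_eq_zero.mp h2.symm).resolve_left hqd
  rcases hq0.lt_or_gt with hqneg | hqpos
  · -- q < 0 : rational root theorem
    set P : ℤ[X] := ∑ k ∈ Finset.range (d + 1), C (conway.coeff (2 * k)) * X ^ k with hP
    have hPw : (aeval w) P = 0 := by
      rw [hP, map_sum, ← hPsum]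
      apply Finset.sum_congr rfl
      intro k _
      simp
    have hPc0 : P.coeff 0 = 1 := by
      rw [hP, Polynomial.finset_sum_coeff, Finset.sum_eq_single 0]
      · simp [hc0]
      · intro k hk hkne
        rw [coeff_C_mul, coeff_X_pow, if_neg (Ne.symm hkne), mul_zero]
      · simp
    have hnum := num_dvd_of_is_root (A := ℤ) (K := ℚ) hPw
    rw [hPc0] at hnum
    have hu : IsFractionRing.num ℤ w = 1 ∨ IsFractionRing.num ℤ w = -1 :=
      Int.isUnit_iff.mp (isUnit_of_dvd_one hnum)
    have hnum1 : |((IsFractionRing.num ℤ w : ℤ) : ℚ)| = 1 := by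
      rcases hu with h | h <;> rw [h] <;> norm_num
    set D : ℤ := (IsFractionRing.den ℤ w : ℤ) with hD
    have hDne : D ≠ 0 := nonZeroDivisors.coe_ne_zero _
    have hden := IsFractionRing.mk'_num_den' ℤ w
    rw [algebraMap_int_eq, eq_intCast, eq_intCast] at hden
    have hDQ : ((D : ℤ) : ℚ) ≠ 0 := Int.cast_ne_zero.mpr hDne
    have hwD : w * ((D : ℤ) : ℚ) = ((IsFractionRing.num ℤ w : ℤ) : ℚ) :=
      ((div_eq_iff hDQ).mp hden).symm
    have habs : |w| * |((D : ℤ) : ℚ)| = 1 := by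
      rw [← abs_mul, hwD, hnum1]
    have hD1 : (1 : ℚ) ≤ |((D : ℤ) : ℚ)| := by
      have : (1 : ℤ) ≤ |D| := Int.one_le_abs hDne
      calc (1:ℚ) ≤ ((|D| : ℤ) : ℚ) := by exact_mod_cast this
        _ = |((D : ℤ) : ℚ)| := by push_cast; rfl
    have hwle : w ≤ -4 := by
      rw [hw, div_le_iff_of_neg hqneg]
      nlinarith [sq_nonneg (q + 1)]
    have hwabs : (4 : ℚ) ≤ |w| := by
      rw [abs_of_nonpos (by linarith)]
      linarith
    nlinarith [abs_nonneg w, hwabs, habs, hD1]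
  · -- q > 0 : the sum is positive
    have hw0 : (0 : ℚ) ≤ w := by rw [hw]; positivity
    have hone : (1 : ℚ) ≤ ∑ k ∈ Finset.range (d + 1), (conway.coeff (2 * k) : ℚ) * w ^ k := by
      have hterm := Finset.single_le_sum
        (f := fun k => (conway.coeff (2 * k) : ℚ) * w ^ k)
        (fun k _ => mul_nonneg (by exact_mod_cast hpos (2 * k)) (pow_nonneg hw0 k))
        (Finset.mem_range.mpr (Nat.succ_pos d))
      simpa [hc0] using hterm
    rw [hPsum] at hone
    linarith
end

section
/- Let W be a finite-dimensional vector space over ℚ, let B : W × W → ℚ be a bilinear form, and let t : W → W be a linear endomorphism whose characteristic polynomial has no root in ℚ. Define μ : W × W → ℚ by μ(v, w) = B(t(v), w) + B(t(w), v). Suppose Λ is a nonzero t-invariant subspace of W (t(Λ) ⊆ Λ) that is totally isotropic for B (i.e., B(v, w) = 0 for all v, w ∈ Λ). Then every subspace P of W on which μ is positive definite (μ(u, u) > 0 for every nonzero u ∈ P) satisfies dim P ≤ dim W − 2, and every subspace N of W on which μ is negative definite (μ(u, u) < 0 for every nonzero u ∈ N) satisfies dim N ≤ dim W − 2. -/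
/-- Algebraic core of Proposition 5.4: if the characteristic polynomial of
`t` has no rational root and there is a nonzero `t`-invariant totally
`B`-isotropic subspace `Λ`, then every subspace on which the Milnor form
`μ(v, w) = B(t v, w) + B(t w, v)` is positive (resp. negative) definite has
dimension at most `dim W - 2`. -/
theorem milnor_form_definite_subspace_bound (W : Type*)
    [AddCommGroup W] [Module ℚ W] [FiniteDimensional ℚ W]
    (B : W →ₗ[ℚ] W →ₗ[ℚ] ℚ) (t : W →ₗ[ℚ] W)
    (hroot : ∀ r : ℚ, ¬ (LinearMap.charpoly t).IsRoot r)
    (μ : W → W → ℚ)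
    (hμ : ∀ v w : W, μ v w = B (t v) w + B (t w) v)
    (Λ : Submodule ℚ W) (hΛne : Λ ≠ ⊥)
    (hinv : ∀ v ∈ Λ, t v ∈ Λ)
    (hiso : ∀ v ∈ Λ, ∀ w ∈ Λ, B v w = 0) :
    (∀ P : Submodule ℚ W, (∀ u ∈ P, u ≠ 0 → 0 < μ u u) →
        Module.finrank ℚ P ≤ Module.finrank ℚ W - 2) ∧
    (∀ N : Submodule ℚ W, (∀ u ∈ N, u ≠ 0 → μ u u < 0) →
        Module.finrank ℚ N ≤ Module.finrank ℚ W - 2) := by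
  -- μ vanishes on Λ
  have hμΛ : ∀ v ∈ Λ, μ v v = 0 := by
    intro v hv
    rw [hμ, hiso _ (hinv v hv) _ hv, add_zero]
  -- Λ has dimension ≥ 2
  have h1 : 1 ≤ Module.finrank ℚ Λ := by
    rw [Nat.one_le_iff_ne_zero]
    intro h
    exact hΛne (Submodule.finrank_eq_zero.mp h)
  have h2 : 2 ≤ Module.finrank ℚ Λ := by
    by_contra h
    have hΛ1 : Module.finrank ℚ Λ = 1 := by omega
    obtain ⟨v, hv, hvne⟩ := Submodule.exists_mem_ne_zero_of_ne_bot hΛne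
    have hspan : Submodule.span ℚ {v} = Λ := by
      apply Submodule.eq_of_le_of_finrank_eq
      · rwa [Submodule.span_singleton_le_iff_mem]
      · rw [finrank_span_singleton hvne, hΛ1]
    have htv : t v ∈ Submodule.span ℚ {v} := by
      rw [hspan]; exact hinv v hv
    obtain ⟨c, hc⟩ := Submodule.mem_span_singleton.mp htv
    have hev : Module.End.HasEigenvalue t c :=
      Module.End.hasEigenvalue_of_hasEigenvector
        ⟨Module.End.mem_eigenspace_iff.mpr hc.symm, hvne⟩
    have hmin : (minpoly ℚ t).IsRoot c :=
      (Module.End.hasEigenvalue_iff_isRoot).mp hev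
    obtain ⟨F, hF⟩ := LinearMap.minpoly_dvd_charpoly t
    apply hroot c
    rw [Polynomial.IsRoot, hF, Polynomial.eval_mul, hmin, zero_mul]
  -- definite subspaces intersect Λ trivially
  have key : ∀ S : Submodule ℚ W, (∀ u ∈ S, u ≠ 0 → μ u u ≠ 0) →
      Module.finrank ℚ S ≤ Module.finrank ℚ W - 2 := by
    intro S hS
    have hdisj : S ⊓ Λ = ⊥ := by
      rw [Submodule.eq_bot_iff]
      intro x hx
      by_contra hne
      exact hS x hx.1 hne (hμΛ x hx.2)
    have := Submodule.finrank_sup_add_finrank_inf_eq S Λ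
    rw [hdisj] at this
    simp only [finrank_bot, add_zero] at this
    have hle : Module.finrank ℚ ↥(S ⊔ Λ) ≤ Module.finrank ℚ W :=
      Submodule.finrank_le _
    omega
  constructor
  · intro P hP
    exact key P fun u hu hne => ne_of_gt (hP u hu hne)
  · intro N hN
    exact key N fun u hu hne => ne_of_lt (hN u hu hne)
end
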